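/- arXiv:2101.08390 — 2 statements merged into one kernel-verified Lean document; each statement's English description precedes it below -/
import Mathlib

section
/- For any two probability measures p and q that are mutually absolutely continuous, the Jensen-Shannon divergence satisfies Lin's inequality: D_JS(p||q) ≤ (1/4)(D_KL(p||q) + D_KL(q||p)). -/
open MeasureTheory ProbabilityTheory Real
open scoped ENNReal NNReal Classical

/-- Kullback-Leibler divergence, extended-real-valued: `⊤` unless `p ≪ q` and the
log-likelihood ratio is `p`-integrable. -/
noncomputable def klDivE {Ω : Type*} [MeasurableSpace Ω] (p q : Measure Ω) : EReal :=
  if p ≪ q ∧ Integrable (fun ω => Real.log ((p.rnDeriv q) ω).toReal) p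
  then ((∫ ω, Real.log ((p.rnDeriv q) ω).toReal ∂p : ℝ) : EReal)
  else ⊤

/-- The mixture `(p + q)/2`. -/
noncomputable def mix {Ω : Type*} [MeasurableSpace Ω] (p q : Measure Ω) : Measure Ω :=
  (1/2 : ℝ≥0∞) • (p + q)

/-- Jensen-Shannon divergence. -/
noncomputable def jsDivE {Ω : Type*} [MeasurableSpace Ω] (p q : Measure Ω) : EReal :=
  (1/2 : EReal) * (klDivE p (mix p q) + klDivE q (mix p q))

section Aux

variable {Ω : Type*} [MeasurableSpace Ω]

lemma mix_comm (p q : Measure Ω) : mix p q = mix q p := by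
  rw [mix, mix, add_comm]

instance mix_prob (p q : Measure Ω) [IsProbabilityMeasure p] [IsProbabilityMeasure q] :
    IsProbabilityMeasure (mix p q) := by
  constructor
  rw [mix]
  simp only [Measure.smul_apply, Measure.add_apply, measure_univ, smul_eq_mul]
  rw [one_add_one_eq_two]
  rw [ENNReal.div_mul_cancel (by norm_num) (by norm_num)]

lemma ac_mix_left (p q : Measure Ω) : p ≪ mix p q := by
  have h1 : p ≪ p + q :=
    Measure.absolutelyContinuous_of_le (Measure.le_add_right le_rfl)
  exact h1.trans (Measure.absolutelyContinuous_smul (by norm_num))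

/-- AM-GM based inequality: `log (2r/(1+r)) ≤ (log r)/2` for `r > 0`. -/
lemma log_ratio_le {r : ℝ} (hr : 0 < r) : log (2 * r / (1 + r)) ≤ log r / 2 := by
  have h1r : 0 < 1 + r := by linarith
  have hs2 : Real.sqrt r ^ 2 = r := Real.sq_sqrt hr.le
  have hsn : 0 ≤ Real.sqrt r := Real.sqrt_nonneg r
  have key : 2 * r ≤ Real.sqrt r * (1 + r) := by
    nlinarith [mul_nonneg hsn (sq_nonneg (Real.sqrt r - 1))]
  have hdiv : 2 * r / (1 + r) ≤ Real.sqrt r := by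
    rw [div_le_iff₀ h1r]; linarith
  calc log (2 * r / (1 + r)) ≤ log (Real.sqrt r) :=
        Real.log_le_log (by positivity) hdiv
    _ = log r / 2 := Real.log_sqrt hr.le

lemma abs_log_ratio_le {r : ℝ} (hr : 0 < r) :
    |log (2 * r / (1 + r))| ≤ log 2 + |log r| := by
  have h1r : 0 < 1 + r := by linarith
  have hg : 0 < 2 * r / (1 + r) := by positivity
  have hlog2 : 0 ≤ log 2 := Real.log_nonneg (by norm_num)
  rw [abs_le]
  constructor
  · rcases le_or_gt r 1 with h | h
    · have hle : r ≤ 2 * r / (1 + r) := by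
        rw [le_div_iff₀ h1r]; nlinarith
      have h2 := Real.log_le_log hr hle
      have h3 : -|log r| ≤ log r := neg_abs_le _
      linarith
    · have hle : (1 : ℝ) ≤ 2 * r / (1 + r) := by
        rw [le_div_iff₀ h1r]; nlinarith
      have h2 := Real.log_nonneg hle
      have := abs_nonneg (log r)
      linarith
  · have hle : 2 * r / (1 + r) ≤ 2 := by
      rw [div_le_iff₀ h1r]; nlinarith
    have h2 := Real.log_le_log hg hle
    have := abs_nonneg (log r)
    linarith

/-- a.e. identity for the RN derivative w.r.t. the mixture. -/
lemma rnDeriv_mix_ae (p q : Measure Ω) [IsProbabilityMeasure p] [IsProbabilityMeasure q]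
    (hpq : p ≪ q) (hqp : q ≪ p) :
    ∀ᵐ ω ∂p, ((p.rnDeriv (mix p q)) ω).toReal
        = 2 * ((p.rnDeriv q) ω).toReal / (1 + ((p.rnDeriv q) ω).toReal)
      ∧ 0 < ((p.rnDeriv q) ω).toReal := by
  have hpm : p ≪ mix p q := ac_mix_left p q
  have h1 : p.rnDeriv (mix p q) * (mix p q).rnDeriv q =ᵐ[q] p.rnDeriv q :=
    Measure.rnDeriv_mul_rnDeriv hpm
  have h2 : (mix p q).rnDeriv q =ᵐ[q] (2⁻¹ : ℝ≥0∞) • (p + q).rnDeriv q := by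
    rw [mix]
    have := Measure.rnDeriv_smul_left_of_ne_top (p + q) q
      (r := (1/2 : ℝ≥0∞)) (by norm_num)
    simpa [one_div] using this
  have h3 : (p + q).rnDeriv q =ᵐ[q] p.rnDeriv q + q.rnDeriv q :=
    Measure.rnDeriv_add' p q q
  have h4 : q.rnDeriv q =ᵐ[q] fun _ => 1 := Measure.rnDeriv_self q
  have h5 : ∀ᵐ x ∂q, p.rnDeriv q x < ∞ := Measure.rnDeriv_lt_top p q
  have h6 : ∀ᵐ x ∂q, 0 < p.rnDeriv q x := hqp.ae_le (Measure.rnDeriv_pos hpq)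
  have key : ∀ᵐ x ∂q, ((p.rnDeriv (mix p q)) x).toReal
        = 2 * ((p.rnDeriv q) x).toReal / (1 + ((p.rnDeriv q) x).toReal)
      ∧ 0 < ((p.rnDeriv q) x).toReal := by
    filter_upwards [h1, h2, h3, h4, h5, h6] with x hx1 hx2 hx3 hx4 hx5 hx6
    set f := p.rnDeriv q x with hf
    set g := p.rnDeriv (mix p q) x with hg
    have hxm : (mix p q).rnDeriv q x = 2⁻¹ * (f + 1) := by
      rw [hx2]
      simp only [Pi.smul_apply, smul_eq_mul, hx3, Pi.add_apply, hx4]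
      rfl
    set c : ℝ≥0∞ := 2⁻¹ * (f + 1) with hc
    have hc0 : c ≠ 0 := by
      simp only [hc, ne_eq, mul_eq_zero, ENNReal.inv_eq_zero]
      push_neg
      exact ⟨by norm_num, by simp⟩
    have hctop : c ≠ ⊤ := by
      simp only [hc]
      exact ENNReal.mul_ne_top (by norm_num) (by simp [hx5.ne])
    have hgc : g * c = f := by rw [← hxm]; exact hx1
    have hgdiv : g = f / c := by
      rw [ENNReal.eq_div_iff hc0 hctop, mul_comm]; exact hgc
    have hftop : f ≠ ⊤ := hx5.ne
    have hfpos : 0 < f.toReal := ENNReal.toReal_pos hx6.ne' hftop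
    refine ⟨?_, hfpos⟩
    rw [hgdiv, ENNReal.toReal_div, hc, ENNReal.toReal_mul, ENNReal.toReal_add hftop (by simp)]
    simp only [ENNReal.toReal_inv, ENNReal.toReal_ofNat, ENNReal.toReal_one]
    rw [eq_div_iff (by positivity)]
    field_simp
    ring
  exact hpq.ae_le key

/-- One-sided comparison: integrability and the integral bound for `KL(p ‖ mix p q)`. -/
lemma kl_mix_le (p q : Measure Ω) [IsProbabilityMeasure p] [IsProbabilityMeasure q]
    (hpq : p ≪ q) (hqp : q ≪ p)
    (hint : Integrable (fun ω => Real.log ((p.rnDeriv q) ω).toReal) p) :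
    Integrable (fun ω => Real.log ((p.rnDeriv (mix p q)) ω).toReal) p ∧
    ∫ ω, Real.log ((p.rnDeriv (mix p q)) ω).toReal ∂p
      ≤ (∫ ω, Real.log ((p.rnDeriv q) ω).toReal ∂p) / 2 := by
  have hae := rnDeriv_mix_ae p q hpq hqp
  have hbound : ∀ᵐ ω ∂p, |Real.log ((p.rnDeriv (mix p q)) ω).toReal|
      ≤ Real.log 2 + |Real.log ((p.rnDeriv q) ω).toReal| := by
    filter_upwards [hae] with ω hω
    rw [hω.1]; exact abs_log_ratio_le hω.2
  have hmeas : AEStronglyMeasurable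
      (fun ω => Real.log ((p.rnDeriv (mix p q)) ω).toReal) p :=
    ((Measure.measurable_rnDeriv p (mix p q)).ennreal_toReal.log).aestronglyMeasurable
  have hint2 : Integrable
      (fun ω => Real.log 2 + |Real.log ((p.rnDeriv q) ω).toReal|) p :=
    (integrable_const _).add hint.abs
  have hintg : Integrable (fun ω => Real.log ((p.rnDeriv (mix p q)) ω).toReal) p := by
    refine hint2.mono hmeas ?_
    filter_upwards [hbound] with ω h
    have h2 : (0:ℝ) ≤ Real.log 2 + |Real.log ((p.rnDeriv q) ω).toReal| :=
      add_nonneg (Real.log_nonneg (by norm_num)) (abs_nonneg _)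
    simpa [Real.norm_eq_abs, abs_of_nonneg h2] using h
  refine ⟨hintg, ?_⟩
  have hle : ∀ᵐ ω ∂p, Real.log ((p.rnDeriv (mix p q)) ω).toReal
      ≤ Real.log ((p.rnDeriv q) ω).toReal / 2 := by
    filter_upwards [hae] with ω hω
    rw [hω.1]; exact log_ratio_le hω.2
  calc ∫ ω, Real.log ((p.rnDeriv (mix p q)) ω).toReal ∂p
      ≤ ∫ ω, Real.log ((p.rnDeriv q) ω).toReal / 2 ∂p :=
        integral_mono_ae hintg (hint.div_const 2) hle
    _ = (∫ ω, Real.log ((p.rnDeriv q) ω).toReal ∂p) / 2 := integral_div 2 _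

lemma klDivE_ne_bot (p q : Measure Ω) : klDivE p q ≠ ⊥ := by
  rw [klDivE]
  split_ifs <;> simp

end Aux

/-- Lin's inequality. -/
theorem js_le_quarter_sym_kl {Ω : Type*} [MeasurableSpace Ω] (p q : Measure Ω)
    [IsProbabilityMeasure p] [IsProbabilityMeasure q] (hpq : p ≪ q) (hqp : q ≪ p) :
    jsDivE p q ≤ (klDivE p q + klDivE q p) / 4 := by
  have h4pos : (0 : EReal) < 4 := by norm_num
  have h4top : (4 : EReal) ≠ ⊤ := by
    rw [show (4:EReal) = ((4:ℝ):EReal) by norm_cast]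
    exact EReal.coe_ne_top _
  by_cases hA : Integrable (fun ω => Real.log ((p.rnDeriv q) ω).toReal) p
  swap
  · have : klDivE p q = ⊤ := by rw [klDivE, if_neg (by tauto)]
    rw [this, EReal.top_add_of_ne_bot (klDivE_ne_bot q p),
      EReal.top_div_of_pos_ne_top h4pos h4top]
    exact le_top
  by_cases hB : Integrable (fun ω => Real.log ((q.rnDeriv p) ω).toReal) q
  swap
  · have : klDivE q p = ⊤ := by rw [klDivE, if_neg (by tauto)]
    rw [this, EReal.add_top_of_ne_bot (klDivE_ne_bot p q),
      EReal.top_div_of_pos_ne_top h4pos h4top]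
    exact le_top
  obtain ⟨hintP, hleP⟩ := kl_mix_le p q hpq hqp hA
  obtain ⟨hintQ, hleQ⟩ := kl_mix_le q p hqp hpq hB
  set A := ∫ ω, Real.log ((p.rnDeriv (mix p q)) ω).toReal ∂p with hAdef
  set B := ∫ ω, Real.log ((q.rnDeriv (mix q p)) ω).toReal ∂q with hBdef
  set C := ∫ ω, Real.log ((p.rnDeriv q) ω).toReal ∂p with hCdef
  set D := ∫ ω, Real.log ((q.rnDeriv p) ω).toReal ∂q with hDdef
  have hkl1 : klDivE p (mix p q) = (A : EReal) := by
    rw [klDivE, if_pos ⟨ac_mix_left p q, hintP⟩]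
  have hkl2 : klDivE q (mix p q) = (B : EReal) := by
    rw [mix_comm p q, klDivE, if_pos ⟨ac_mix_left q p, hintQ⟩]
  have hkl3 : klDivE p q = (C : EReal) := by rw [klDivE, if_pos ⟨hpq, hA⟩]
  have hkl4 : klDivE q p = (D : EReal) := by rw [klDivE, if_pos ⟨hqp, hB⟩]
  rw [jsDivE, hkl1, hkl2, hkl3, hkl4]
  have hhalf : (1/2 : EReal) = ((1/2 : ℝ) : EReal) := by
    rw [one_div, one_div, EReal.coe_inv]
    norm_cast
  have h4 : (4 : EReal) = ((4 : ℝ) : EReal) := by norm_cast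
  rw [hhalf, h4, ← EReal.coe_add, ← EReal.coe_add, ← EReal.coe_mul, ← EReal.coe_div,
    EReal.coe_le_coe_iff]
  linarith
end

section
/- If a real-valued random variable X satisfies a ≤ X ≤ b almost surely for scalars a ≤ b, then X is σ²-sub-Gaussian with σ² = (b-a)²/4, i.e., E[exp(λ(X - E[X]))] ≤ exp(λ²(b-a)²/8) for all real λ. -/
open MeasureTheory ProbabilityTheory Real

lemma hoeffding_core (t : ℝ) (ht0 : 0 ≤ t) (ht1 : t ≤ 1) (h : ℝ) :
    (1 - t) * exp (-t * h) + t * exp ((1 - t) * h) ≤ exp (h ^ 2 / 8) := by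
  set D : ℝ → ℝ := fun x => 1 - t + t * exp x with hD
  have hDpos : ∀ x, 0 < D x := by
    intro x
    rcases eq_or_lt_of_le ht0 with h0 | h0
    · simp [hD, ← h0]
    · have : 0 < t * exp x := mul_pos h0 (exp_pos x)
      simp only [hD]; linarith
  set F : ℝ → ℝ := fun x => x ^ 2 / 8 + t * x - log (D x) with hF
  set F' : ℝ → ℝ := fun x => x / 4 + t - t * exp x / D x with hF'
  have hderiv : ∀ x, HasDerivAt F (F' x) x := by
    intro x
    have hd : HasDerivAt D (t * exp x) x := by
      exact ((hasDerivAt_exp x).const_mul t).const_add (1 - t)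
    have hlog : HasDerivAt (fun y => log (D y)) (t * exp x / D x) x :=
      (hd.log (hDpos x).ne')
    have h1 : HasDerivAt (fun y => y ^ 2 / 8 + t * y) (x / 4 + t) x := by
      have := ((hasDerivAt_pow 2 x).div_const 8).add ((hasDerivAt_id x).const_mul t)
      refine this.congr_deriv ?_; simp; ring
    exact h1.sub hlog
  have hderiv' : ∀ x, HasDerivAt F' (1 / 4 - t * exp x * (1 - t) / (D x) ^ 2) x := by
    intro x
    have hd : HasDerivAt D (t * exp x) x := by
      exact ((hasDerivAt_exp x).const_mul t).const_add (1 - t)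
    have hq : HasDerivAt (fun y => t * exp y / D y)
        ((t * exp x * D x - t * exp x * (t * exp x)) / (D x) ^ 2) x :=
      ((hasDerivAt_exp x).const_mul t).div hd (hDpos x).ne'
    have h1 : HasDerivAt (fun y => y / 4 + t) (1 / 4) x := by
      simpa using ((hasDerivAt_id x).div_const 4).add_const t
    have := h1.sub hq
    refine this.congr_deriv ?_
    have hDe : D x - t * exp x = 1 - t := by simp [hD]
    have : t * exp x * D x - t * exp x * (t * exp x) = t * exp x * (1 - t) := by
      rw [← hDe]; ring
    rw [this]
  have hF''nonneg : ∀ x, 0 ≤ 1 / 4 - t * exp x * (1 - t) / (D x) ^ 2 := by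
    intro x
    set u : ℝ := t * exp x / D x with hu
    have hu0 : 0 ≤ u := div_nonneg (mul_nonneg ht0 (exp_pos x).le) (hDpos x).le
    have hu1 : u ≤ 1 := by
      rw [hu, div_le_one (hDpos x)]
      simp only [hD]; linarith
    have key : t * exp x * (1 - t) / (D x) ^ 2 = u * (1 - u) := by
      have h1u : 1 - u = (1 - t) / D x := by
        rw [eq_div_iff (hDpos x).ne', sub_mul, hu, div_mul_cancel₀ _ (hDpos x).ne']
        simp only [hD, one_mul]; ring
      rw [h1u, hu, div_mul_div_comm, sq]
    rw [key]
    nlinarith [sq_nonneg (u - 1/2)]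
  have hF'mono : Monotone F' :=
    monotone_of_deriv_nonneg (fun x => (hderiv' x).differentiableAt)
      (fun x => by rw [(hderiv' x).deriv]; exact hF''nonneg x)
  have hF'0 : F' 0 = 0 := by simp [hF', hD]
  have hFnonneg : ∀ x, 0 ≤ F x := by
    have hF0 : F 0 = 0 := by simp [hF, hD]
    intro x
    have hFc : Continuous F := (Differentiable.continuous fun y => (hderiv y).differentiableAt)
    rcases le_total 0 x with hx | hx
    · have hmono : MonotoneOn F (Set.Ici (0:ℝ)) := by
        apply monotoneOn_of_deriv_nonneg (convex_Ici 0) hFc.continuousOn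
          (fun y _ => (hderiv y).differentiableAt.differentiableWithinAt)
        intro y hy
        rw [interior_Ici] at hy
        rw [(hderiv y).deriv, ← hF'0]
        exact hF'mono hy.le
      calc (0:ℝ) = F 0 := hF0.symm
        _ ≤ F x := hmono Set.self_mem_Ici hx hx
    · have hanti : AntitoneOn F (Set.Iic (0:ℝ)) := by
        apply antitoneOn_of_deriv_nonpos (convex_Iic 0) hFc.continuousOn
          (fun y _ => (hderiv y).differentiableAt.differentiableWithinAt)
        intro y hy
        rw [interior_Iic] at hy
        rw [(hderiv y).deriv, ← hF'0]
        exact hF'mono hy.le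
      calc (0:ℝ) = F 0 := hF0.symm
        _ ≤ F x := hanti hx Set.self_mem_Iic hx
  have hFh := hFnonneg h
  have hlog : log (D h) ≤ h ^ 2 / 8 + t * h := by simp only [hF] at hFh; linarith
  have hDle : D h ≤ exp (h ^ 2 / 8 + t * h) :=
    (log_le_iff_le_exp (hDpos h)).mp hlog
  have := mul_le_mul_of_nonneg_left hDle (exp_pos (-t * h)).le
  calc (1 - t) * exp (-t * h) + t * exp ((1 - t) * h)
      = exp (-t * h) * D h := by
        simp only [hD]
        rw [show (1 - t) * h = -t * h + h by ring, exp_add]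
        ring
    _ ≤ exp (-t * h) * exp (h ^ 2 / 8 + t * h) := this
    _ = exp (h ^ 2 / 8) := by rw [← exp_add]; congr 1; ring

/-- Hoeffding's lemma: a random variable bounded in `[a, b]` almost surely is
`(b-a)²/4`-sub-Gaussian. -/
theorem bounded_subGaussian {Ω : Type*} [MeasurableSpace Ω] (μ : Measure Ω)
    [IsProbabilityMeasure μ] (X : Ω → ℝ) (hX : Measurable X) (a b : ℝ) (hab : a ≤ b)
    (hbdd : ∀ᵐ ω ∂μ, a ≤ X ω ∧ X ω ≤ b) :
    ∀ l : ℝ, ∫ ω, Real.exp (l * (X ω - ∫ ω', X ω' ∂μ)) ∂μ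
      ≤ Real.exp (l ^ 2 * (b - a) ^ 2 / 8) := by
  intro l
  -- integrability of X
  have hXint : Integrable X μ := by
    refine Integrable.mono' (integrable_const (max |a| |b|)) hX.aestronglyMeasurable ?_
    filter_upwards [hbdd] with ω ⟨h1, h2⟩
    rw [Real.norm_eq_abs, abs_le]
    constructor
    · exact le_trans (neg_le_neg (le_max_left |a| |b|)) (neg_abs_le a |>.trans h1 |> le_trans (by linarith [neg_abs_le a]))
    · exact h2.trans (le_trans (le_abs_self b) (le_max_right _ _))
  set m : ℝ := ∫ ω', X ω' ∂μ with hm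
  have ham : a ≤ m := by
    have : ∫ _ : Ω, a ∂μ ≤ ∫ ω, X ω ∂μ :=
      integral_mono_ae (integrable_const a) hXint (hbdd.mono fun ω h => h.1)
    simpa using this
  have hmb : m ≤ b := by
    have : ∫ ω, X ω ∂μ ≤ ∫ _ : Ω, b ∂μ :=
      integral_mono_ae hXint (integrable_const b) (hbdd.mono fun ω h => h.2)
    simpa using this
  rcases eq_or_lt_of_le hab with hab' | hab'
  · -- a = b : X constant a.e.
    subst hab'
    have hma : m = a := le_antisymm hmb ham
    have : ∀ᵐ ω ∂μ, Real.exp (l * (X ω - m)) = 1 := by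
      filter_upwards [hbdd] with ω ⟨h1, h2⟩
      have : X ω = a := le_antisymm h2 h1
      simp [this, hma]
    rw [integral_congr_ae this]
    simp only [integral_const, probReal_univ, measure_univ, ENNReal.toReal_one, smul_eq_mul, one_mul]
    exact Real.one_le_exp (by positivity)
  · -- a < b
    have hba : (0:ℝ) < b - a := by linarith
    set t : ℝ := (m - a) / (b - a) with ht
    have ht0 : 0 ≤ t := div_nonneg (by linarith) hba.le
    have ht1 : t ≤ 1 := by rw [div_le_one hba]; linarith
    set c1 : ℝ := Real.exp (l * (a - m)) with hc1
    set c2 : ℝ := Real.exp (l * (b - m)) with hc2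
    -- pointwise convexity bound
    have hpt : ∀ᵐ ω ∂μ, Real.exp (l * (X ω - m))
        ≤ ((b - X ω) / (b - a)) * c1 + ((X ω - a) / (b - a)) * c2 := by
      filter_upwards [hbdd] with ω ⟨h1, h2⟩
      have hθ1 : 0 ≤ (b - X ω) / (b - a) := div_nonneg (by linarith) hba.le
      have hθ2 : 0 ≤ (X ω - a) / (b - a) := div_nonneg (by linarith) hba.le
      have hθs : (b - X ω) / (b - a) + (X ω - a) / (b - a) = 1 := by
        rw [← add_div, div_eq_one_iff_eq hba.ne']
        ring
      have := convexOn_exp.2 (Set.mem_univ (l * (a - m))) (Set.mem_univ (l * (b - m)))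
        hθ1 hθ2 hθs
      simp only [smul_eq_mul] at this
      have harg : (b - X ω) / (b - a) * (l * (a - m)) + (X ω - a) / (b - a) * (l * (b - m))
          = l * (X ω - m) := by
        field_simp
        ring
      rw [harg] at this
      exact this
    -- integrability of both sides
    have hlhs_int : Integrable (fun ω => Real.exp (l * (X ω - m))) μ := by
      refine Integrable.mono' (integrable_const (Real.exp (|l| * (|a - m| + |b - m|))))
        (((hX.sub_const m).const_mul l).exp).aestronglyMeasurable ?_
      filter_upwards [hbdd] with ω ⟨h1, h2⟩
      rw [Real.norm_eq_abs, abs_exp]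
      apply Real.exp_le_exp.mpr
      have hXm : |X ω - m| ≤ |a - m| + |b - m| := by
        rw [abs_le]
        constructor
        · have := neg_abs_le (a - m); nlinarith [abs_nonneg (b - m)]
        · have := le_abs_self (b - m); nlinarith [abs_nonneg (a - m)]
      calc l * (X ω - m) ≤ |l * (X ω - m)| := le_abs_self _
        _ = |l| * |X ω - m| := abs_mul _ _
        _ ≤ |l| * (|a - m| + |b - m|) := by
            exact mul_le_mul_of_nonneg_left hXm (abs_nonneg l)
    have hib : Integrable (fun ω => (b - X ω) / (b - a) * c1) μ := by
      have h0 : Integrable (fun ω => b - X ω) μ := by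
        exact ((integrable_const b).sub hXint)
      exact (h0.div_const (b - a)).mul_const c1
    have hia : Integrable (fun ω => (X ω - a) / (b - a) * c2) μ := by
      have h0 : Integrable (fun ω => X ω - a) μ := by
        exact (hXint.sub (integrable_const a))
      exact (h0.div_const (b - a)).mul_const c2
    have hrhs_int : Integrable
        (fun ω => ((b - X ω) / (b - a)) * c1 + ((X ω - a) / (b - a)) * c2) μ := by
      exact hib.add hia
    have hint_le := integral_mono_ae hlhs_int hrhs_int hpt
    have hrhs_val : ∫ ω, (((b - X ω) / (b - a)) * c1 + ((X ω - a) / (b - a)) * c2) ∂μ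
        = ((b - m) / (b - a)) * c1 + ((m - a) / (b - a)) * c2 := by
      rw [integral_add hib hia, integral_mul_const, integral_mul_const, integral_div, integral_div,
        integral_sub (integrable_const b) hXint, integral_sub hXint (integrable_const a)]
      simp [hm]
    rw [hrhs_val] at hint_le
    refine hint_le.trans ?_
    have hkey := hoeffding_core t ht0 ht1 (l * (b - a))
    have e1 : (b - m) / (b - a) = 1 - t := by rw [ht]; field_simp; ring
    have e2 : l * (a - m) = -t * (l * (b - a)) := by rw [ht]; field_simp; ring
    have e3 : l * (b - m) = (1 - t) * (l * (b - a)) := by rw [ht]; field_simp; ring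
    have e4 : (l * (b - a)) ^ 2 / 8 = l ^ 2 * (b - a) ^ 2 / 8 := by ring
    rw [hc1, hc2, e1, e2, e3]
    rw [e4] at hkey
    exact hkey
end
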